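/- Let n ≥ 1, m ∈ ℤ with m ∉ nℤ, set p = n/gcd(n,|m|) ≥ 2. For every ε > 0 there exists k ≥ 1 such that, with d(z) = z^n and r(z) = z^m on 𝕋, the set d^k((r^k)^{-1}(V_ε)) equals all of 𝕋, where V_ε = { e^{2πiθ} : −ε < θ < ε }. Concretely, d^k((r^k)^{-1}(V_ε)) = ⋃_{j=0}^{|q|^k−1} { e^{2πi(θp^k + j)/q^k} : −ε < θ < ε }, q/p being the reduced form of m/n, and this union is all of 𝕋 whenever 2εp^k > 1. -/

import Mathlib

open Real

/-- One step of the backward-forward set map of the correspondence `d(z) = z^n`,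
`r(z) = z^m` on the circle: `V ↦ d(r⁻¹(V)) = { z^n : z^m ∈ V }`; its `k`-fold
iterate is `d^k((r^k)⁻¹(V))`. -/
def backStep (n : ℕ) (m : ℤ) : Set Circle → Set Circle := fun S =>
  (fun z : Circle => z ^ n) '' ((fun z : Circle => z ^ m) ⁻¹' S)

/-- The arc `V_ε = { e^{2πiθ} : −ε < θ < ε }` on the circle. -/
def arcSet (ε : ℝ) : Set Circle :=
  {w : Circle | ∃ θ : ℝ, -ε < θ ∧ θ < ε ∧ w = Circle.exp (2 * π * θ)}

lemma exp_zpow' (t : ℝ) (m : ℤ) : (Circle.exp t) ^ m = Circle.exp (m * t) := by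
  simpa [zsmul_eq_mul] using (Circle.expHom.map_zsmul t m).symm

lemma exp_npow' (t : ℝ) (n : ℕ) : (Circle.exp t) ^ n = Circle.exp (n * t) := by
  simpa using exp_zpow' t n

lemma mod_decomp (a q : ℤ) (hq : q ≠ 0) (k : ℕ) :
    ∃ j c : ℤ, 0 ≤ j ∧ j < |q| ^ k ∧ a = j + c * q ^ k := by
  have hpos : (0:ℤ) < |q| ^ k := pow_pos (abs_pos.mpr hq) k
  have h1 : |q| ^ k ∣ (a - a % (|q| ^ k)) :=
    ⟨a / (|q|^k), by have := Int.emod_add_mul_ediv a (|q|^k); linarith⟩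
  have h2 : q ^ k ∣ (a - a % (|q| ^ k)) :=
    dvd_trans (by rw [← abs_pow]; exact (dvd_abs _ _).mpr dvd_rfl) h1
  obtain ⟨c, hc⟩ := h2
  exact ⟨a % (|q|^k), c, Int.emod_nonneg a hpos.ne', Int.emod_lt_of_pos a hpos,
    by linarith [mul_comm (q^k) c]⟩

/-- The set `A_k = ⋃_{0 ≤ j < |q|^k} { e^{2πi(θp^k + j)/q^k} : −ε < θ < ε }`. -/
def Ak (p q : ℤ) (ε : ℝ) (k : ℕ) : Set Circle :=
  {w : Circle | ∃ j : ℤ, 0 ≤ j ∧ j < |q| ^ k ∧ ∃ θ : ℝ, -ε < θ ∧ θ < ε ∧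
    w = Circle.exp (2 * π * ((θ * p ^ k + j) / q ^ k))}

lemma arcSet_eq_Ak (p q : ℤ) (ε : ℝ) : arcSet ε = Ak p q ε 0 := by
  ext w
  simp only [arcSet, Ak, Set.mem_setOf_eq, pow_zero]
  constructor
  · rintro ⟨θ, h1, h2, rfl⟩
    refine ⟨0, le_refl _, by norm_num, θ, h1, h2, ?_⟩
    norm_num
  · rintro ⟨j, hj0, hj1, θ, h1, h2, rfl⟩
    have hj : j = 0 := by omega
    subst hj
    refine ⟨θ, h1, h2, ?_⟩
    norm_num

lemma aux_step (n : ℕ) (m : ℤ) (hm0 : m ≠ 0) (p q : ℤ) (hq : q ≠ 0)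
    (hpq : IsCoprime p q) (hred : q * n = m * p) (ε : ℝ) (k : ℕ) :
    backStep n m (Ak p q ε k) = Ak p q ε (k + 1) := by
  have hqR : (q:ℝ) ≠ 0 := Int.cast_ne_zero.mpr hq
  have hmR : (m:ℝ) ≠ 0 := Int.cast_ne_zero.mpr hm0
  have hqkR : (q:ℝ)^k ≠ 0 := pow_ne_zero _ hqR
  have hredR : (q:ℝ) * n = m * p := by exact_mod_cast congrArg (Int.cast : ℤ → ℝ) hred
  ext w
  simp only [backStep, Ak, Set.mem_image, Set.mem_preimage, Set.mem_setOf_eq]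
  constructor
  · rintro ⟨z, ⟨j, hj0, hjk, θ, hθ1, hθ2, hz⟩, rfl⟩
    obtain ⟨t, rfl⟩ : ∃ t, Circle.exp t = z := ⟨_, Circle.exp_arg z⟩
    rw [exp_zpow', Circle.exp_eq_exp] at hz
    obtain ⟨l, hl⟩ := hz
    obtain ⟨J, c, hJ0, hJk, hJc⟩ := mod_decomp (p*(j + l*q^k)) q hq (k+1)
    have hJcR : (p:ℝ)*(j + l*(q:ℝ)^k) = J + c*(q:ℝ)^(k+1) := by
      exact_mod_cast congrArg (Int.cast : ℤ → ℝ) hJc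
    refine ⟨J, hJ0, hJk, θ, hθ1, hθ2, ?_⟩
    rw [exp_npow', Circle.exp_eq_exp]
    refine ⟨c, ?_⟩
    have ht : t = (2*π*(θ*(p:ℝ)^k+j) + l*(2*π)*(q:ℝ)^k)/(m * (q:ℝ)^k) := by
      field_simp at hl ⊢
      linarith
    rw [ht]
    field_simp
    linear_combination ((q:ℝ)^k * ((θ*(p:ℝ)^k + j + l*(q:ℝ)^k))) * hredR +
      ((q:ℝ)^k * (m:ℝ)) * hJcR
  · rintro ⟨J, hJ0, hJk, θ, hθ1, hθ2, rfl⟩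
    obtain ⟨u, v, huv⟩ := hpq.pow_right (n := k+1)
    obtain ⟨j, c, hj0, hjk, hjc⟩ := mod_decomp (u*J) q hq k
    have huvR : (u:ℝ)*p + v*(q:ℝ)^(k+1) = 1 := by
      exact_mod_cast congrArg (Int.cast : ℤ → ℝ) huv
    have hjcR : (u:ℝ)*J = j + c*(q:ℝ)^k := by
      exact_mod_cast congrArg (Int.cast : ℤ → ℝ) hjc
    refine ⟨Circle.exp (2*π*((θ*(p:ℝ)^k + j)/(q:ℝ)^k + c)/m), ⟨j, hj0, hjk, θ, hθ1, hθ2, ?_⟩, ?_⟩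
    · rw [exp_zpow', Circle.exp_eq_exp]
      refine ⟨c, ?_⟩
      field_simp
    · rw [exp_npow', Circle.exp_eq_exp]
      refine ⟨-(v*J), ?_⟩
      push_cast
      field_simp
      linear_combination ((q:ℝ)^k*(θ*(p:ℝ)^k+(j:ℝ)+(c:ℝ)*(q:ℝ)^k))*hredR -
        ((q:ℝ)^k*(m:ℝ)*(p:ℝ))*hjcR + ((q:ℝ)^k*(m:ℝ)*(J:ℝ))*huvR

lemma aux_cover (p q : ℤ) (hp : 0 < p) (hq : q ≠ 0) (ε : ℝ) (hε : 0 < ε) (k : ℕ)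
    (h : 1 < 2 * ε * (p:ℝ) ^ k) : Ak p q ε k = Set.univ := by
  have hqR : (q:ℝ) ≠ 0 := Int.cast_ne_zero.mpr hq
  have hqkR : (q:ℝ)^k ≠ 0 := pow_ne_zero _ hqR
  have hpk : (0:ℝ) < (p:ℝ)^k := pow_pos (by exact_mod_cast hp) k
  have ha : (1:ℝ)/2 < ε*(p:ℝ)^k := by linarith
  ext w
  simp only [Ak, Set.mem_univ, iff_true, Set.mem_setOf_eq]
  obtain ⟨t, rfl⟩ : ∃ t, Circle.exp t = w := ⟨_, Circle.exp_arg w⟩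
  set y : ℝ := t/(2*π)*(q:ℝ)^k with hy
  obtain ⟨N, hN1, hN2⟩ : ∃ N : ℤ, -(ε*(p:ℝ)^k) < y - N ∧ y - N < ε*(p:ℝ)^k := by
    by_cases hc : y - ⌊y⌋ < ε*(p:ℝ)^k
    · exact ⟨⌊y⌋, by nlinarith [Int.floor_le y], hc⟩
    · refine ⟨⌊y⌋+1, ?_, ?_⟩ <;> push_cast
      · nlinarith [not_lt.mp hc]
      · nlinarith [Int.lt_floor_add_one y]
  obtain ⟨j, c, hj0, hjk, hjc⟩ := mod_decomp N q hq k
  have hjcR : (N:ℝ) = j + c*(q:ℝ)^k := by exact_mod_cast congrArg (Int.cast : ℤ → ℝ) hjc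
  refine ⟨j, hj0, hjk, (y - N)/(p:ℝ)^k, ?_, ?_, ?_⟩
  · rw [lt_div_iff₀ hpk]
    nlinarith
  · rw [div_lt_iff₀ hpk]
    nlinarith
  · rw [Circle.exp_eq_exp]
    refine ⟨c, ?_⟩
    rw [hy]
    field_simp
    linear_combination (2*π) * hjcR

theorem stmt8 (n : ℕ) (hn : 1 ≤ n) (m : ℤ) (hm : ¬ (n : ℤ) ∣ m)
    (p q : ℤ) (hp : 0 < p) (hq : q ≠ 0) (hpq : IsCoprime p q) (hred : q * n = m * p)
    (ε : ℝ) (hε : 0 < ε) :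
    (∀ k : ℕ, 1 ≤ k →
      (backStep n m)^[k] (arcSet ε) =
        {w : Circle | ∃ j : ℤ, 0 ≤ j ∧ j < |q| ^ k ∧ ∃ θ : ℝ, -ε < θ ∧ θ < ε ∧
          w = Circle.exp (2 * π * ((θ * p ^ k + j) / q ^ k))}) ∧
    (∀ k : ℕ, 1 ≤ k → 1 < 2 * ε * (p : ℝ) ^ k →
      (backStep n m)^[k] (arcSet ε) = Set.univ) ∧
    (∃ k : ℕ, 1 ≤ k ∧ (backStep n m)^[k] (arcSet ε) = Set.univ) := by
  have hm0 : m ≠ 0 := by rintro rfl; exact hm (dvd_zero _)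
  have iter : ∀ k : ℕ, (backStep n m)^[k] (arcSet ε) = Ak p q ε k := by
    intro k
    induction k with
    | zero => simpa using arcSet_eq_Ak p q ε
    | succ k ih =>
      rw [Function.iterate_succ_apply', ih, aux_step n m hm0 p q hq hpq hred ε k]
  have cover : ∀ k : ℕ, 1 < 2 * ε * (p : ℝ) ^ k →
      (backStep n m)^[k] (arcSet ε) = Set.univ := by
    intro k hk
    rw [iter k]
    exact aux_cover p q hp hq ε hε k hk
  refine ⟨fun k _ => iter k, fun k _ hk => cover k hk, ?_⟩
  have hp2 : (2:ℤ) ≤ p := by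
    rcases lt_or_ge p 2 with h | h
    · interval_cases p
      · exact absurd ⟨q, by linarith⟩ hm
    · exact h
  have hP1 : (1:ℝ) < (p:ℝ) := by exact_mod_cast (by omega : (1:ℤ) < p)
  obtain ⟨k, hk⟩ := pow_unbounded_of_one_lt (1/(2*ε)) hP1
  have hpkpos : (0:ℝ) < (p:ℝ)^k := pow_pos (by linarith) k
  have h1 : 1 < 2 * ε * (p:ℝ)^k := by
    rw [div_lt_iff₀ (by linarith : (0:ℝ) < 2*ε)] at hk
    nlinarith
  have h2 : (p:ℝ)^k ≤ (p:ℝ)^(k+1) := by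
    calc (p:ℝ)^k = (p:ℝ)^k * 1 := by ring
    _ ≤ (p:ℝ)^k * p := by nlinarith
    _ = (p:ℝ)^(k+1) := by ring
  refine ⟨k+1, Nat.le_add_left 1 k, cover (k+1) ?_⟩
  nlinarith
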